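/- arXiv:1211.2574 — 4 statements merged into one kernel-verified Lean document; each statement's English description precedes it below -/
import Mathlib

section
/- Let W : Ω × ℝ^d × ℝ^{d×N} → ℝ be continuous, satisfying the growth condition (1/C)|ξ| - C ≤ W(x,u,ξ) ≤ C(1+|ξ|), and suppose for every compact K ⊂ Ω × ℝ^d there is a modulus of continuity ω_K with |W(x,u,ξ) - W(x',u',ξ)| ≤ ω_K(|x-x'|+|u-u'|)(1+|ξ|) for all (x,u),(x',u') ∈ K and all ξ. Then for every compact K ⊂ Ω × ℝ^d there exists a modulus of continuity ω'_K such that |QW(x,u,ξ) - QW(x',u',ξ)| ≤ ω'_K(|x-x'|+|u-u'|)(1+|ξ|) for all (x,u),(x',u') ∈ K and all ξ ∈ ℝ^{d×N}. -/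
open MeasureTheory Filter Set
open scoped NNReal

noncomputable section

/-- The open unit cube `Q = (0,1)^N` in `ℝ^N`. -/
def unitCube (N : ℕ) : Set (Fin N → ℝ) := Set.univ.pi fun _ => Set.Ioo (0:ℝ) 1

/-- The gradient matrix `∇φ(y) ∈ ℝ^{d×N}` of `φ : ℝ^N → ℝ^d`. -/
def gradMat {N d : ℕ} (φ : (Fin N → ℝ) → (Fin d → ℝ)) (y : Fin N → ℝ) :
    Fin d → Fin N → ℝ := fun i j => fderiv ℝ φ y (Pi.single j 1) i

/-- Test functions in `W_0^{1,∞}(Q;ℝ^d)`: Lipschitz maps vanishing outside the unit cube. -/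
def TestFun {N d : ℕ} (φ : (Fin N → ℝ) → (Fin d → ℝ)) : Prop :=
  (∃ K, LipschitzWith K φ) ∧ ∀ y ∉ unitCube N, φ y = 0

/-- Quasiconvex envelope (quasiconvexification) of `h` computed over the unit cube. -/
def qcEnv {N d : ℕ} (h : (Fin d → Fin N → ℝ) → ℝ) (ξ : Fin d → Fin N → ℝ) : ℝ :=
  sInf {r | ∃ φ, TestFun φ ∧ r = ∫ y in unitCube N, h (ξ + gradMat φ y)}

/-- Recession function: `h^∞(ξ) = limsup_{t→∞} h(tξ)/t`. -/
def recFn {N d : ℕ} (h : (Fin d → Fin N → ℝ) → ℝ) (ξ : Fin d → Fin N → ℝ) : ℝ :=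
  Filter.limsup (fun t : ℝ => h (t • ξ) / t) Filter.atTop

/-- Quasiconvexity in the sense of Morrey: for some bounded open set `D` of positive
measure, `h(ξ) ≤ (1/|D|) ∫_D h(ξ + ∇φ)` for all Lipschitz `φ` vanishing outside `D`. -/
def MorreyQC {N d : ℕ} (h : (Fin d → Fin N → ℝ) → ℝ) : Prop :=
  ∃ D : Set (Fin N → ℝ), IsOpen D ∧ Bornology.IsBounded D ∧ 0 < volume D ∧
    ∀ (ξ : Fin d → Fin N → ℝ) (φ : (Fin N → ℝ) → Fin d → ℝ),
      (∃ K, LipschitzWith K φ) → (∀ y ∉ D, φ y = 0) →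
      h ξ ≤ ((volume D).toReal)⁻¹ * ∫ y in D, h (ξ + gradMat φ y)

/-- A modulus of continuity. -/
def Modulus (ω : ℝ → ℝ) : Prop := Continuous ω ∧ ω 0 = 0 ∧ ∀ t, 0 ≤ ω t

/-- Convex envelope of `g : ℝ^m → ℝ`: pointwise supremum of convex minorants. -/
def convEnv {m : ℕ} (g : (Fin m → ℝ) → ℝ) (v : Fin m → ℝ) : ℝ :=
  sSup {r | ∃ h : (Fin m → ℝ) → ℝ, ConvexOn ℝ Set.univ h ∧ (∀ w, h w ≤ g w) ∧ r = h v}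

/-- Supremum of lower semicontinuous convex minorants (the biconjugate `g**`). -/
def biconj {m : ℕ} (g : (Fin m → ℝ) → ℝ) (v : Fin m → ℝ) : ℝ :=
  sSup {r | ∃ h : (Fin m → ℝ) → ℝ, ConvexOn ℝ Set.univ h ∧ LowerSemicontinuous h ∧
    (∀ w, h w ≤ g w) ∧ r = h v}

/-- Quasiconvex-convex envelope of `f(ξ,v)` over the unit cube. -/
def qcxcEnv {N d m : ℕ} (f : (Fin d → Fin N → ℝ) → (Fin m → ℝ) → ℝ)
    (ξ : Fin d → Fin N → ℝ) (v : Fin m → ℝ) : ℝ :=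
  sInf {r | ∃ (ψ : (Fin N → ℝ) → Fin d → ℝ) (η : (Fin N → ℝ) → Fin m → ℝ),
    TestFun ψ ∧ Measurable η ∧ (∃ M, ∀ y, ‖η y‖ ≤ M) ∧
    (∫ y in unitCube N, η y) = 0 ∧
    r = ∫ y in unitCube N, f (ξ + gradMat ψ y) (v + η y)}


namespace Stmt1Aux

variable {N d : ℕ}

lemma measurableSet_unitCube : MeasurableSet (unitCube N) :=
  (isOpen_set_pi Set.finite_univ fun _ _ => isOpen_Ioo).measurableSet

lemma volume_unitCube : volume (unitCube N) = 1 := by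
  rw [unitCube, volume_pi_pi]
  simp [Real.volume_Ioo]

lemma norm_gradMat_le {φ : (Fin N → ℝ) → Fin d → ℝ} {K : ℝ≥0}
    (h : LipschitzWith K φ) (y : Fin N → ℝ) : ‖gradMat φ y‖ ≤ K := by
  rw [pi_norm_le_iff_of_nonneg K.coe_nonneg]
  intro i
  rw [pi_norm_le_iff_of_nonneg K.coe_nonneg]
  intro j
  calc ‖gradMat φ y i j‖ ≤ ‖fderiv ℝ φ y (Pi.single j 1)‖ := norm_le_pi_norm _ i
    _ ≤ ‖fderiv ℝ φ y‖ * ‖(Pi.single j 1 : Fin N → ℝ)‖ := (fderiv ℝ φ y).le_opNorm _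
    _ ≤ K * 1 := by
        apply mul_le_mul (norm_fderiv_le_of_lipschitz ℝ h) _ (norm_nonneg _) K.coe_nonneg
        rw [Pi.norm_single]; simp
    _ = K := mul_one _

lemma measurable_gradMat (φ : (Fin N → ℝ) → Fin d → ℝ) :
    Measurable (gradMat φ) := by
  apply measurable_pi_lambda
  intro i
  apply measurable_pi_lambda
  intro j
  exact (measurable_pi_apply i).comp (measurable_fderiv_apply_const ℝ (f := φ) (Pi.single j 1))

lemma gradMat_zero : gradMat (fun _ : Fin N → ℝ => (0 : Fin d → ℝ)) = fun _ => 0 := by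
  funext y i j
  simp [gradMat, fderiv_const_apply]

lemma integrableOn_comp {h : (Fin d → Fin N → ℝ) → ℝ} (hc : Continuous h)
    {φ : (Fin N → ℝ) → Fin d → ℝ} {K : ℝ≥0} (hφ : LipschitzWith K φ)
    (ξ : Fin d → Fin N → ℝ) :
    IntegrableOn (fun y => h (ξ + gradMat φ y)) (unitCube N) := by
  obtain ⟨B, hB⟩ := (isCompact_closedBall (0 : Fin d → Fin N → ℝ) (‖ξ‖ + K)).exists_bound_of_continuousOn hc.continuousOn
  refine Integrable.mono' (g := fun _ => B)
    (integrableOn_const (by rw [volume_unitCube]; exact ENNReal.one_ne_top)) ?_ ?_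
  · exact (hc.measurable.comp (measurable_const.add (measurable_gradMat φ))).aestronglyMeasurable
  · refine Filter.Eventually.of_forall fun y => hB _ ?_
    rw [Metric.mem_closedBall, dist_zero_right]
    calc ‖ξ + gradMat φ y‖ ≤ ‖ξ‖ + ‖gradMat φ y‖ := norm_add_le _ _
      _ ≤ ‖ξ‖ + K := by have := norm_gradMat_le hφ y; linarith

end Stmt1Aux

end

namespace Stmt1Aux

variable {N d : ℕ}

lemma mem_qcEnv_set (h : (Fin d → Fin N → ℝ) → ℝ) (ξ : Fin d → Fin N → ℝ) :
    (h ξ) ∈ {r | ∃ φ, TestFun φ ∧ r = ∫ y in unitCube N, h (ξ + gradMat φ y)} := by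
  refine ⟨fun _ => 0, ⟨⟨0, LipschitzWith.const' 0⟩, fun _ _ => rfl⟩, ?_⟩
  rw [gradMat_zero]
  simp only [add_zero]
  rw [MeasureTheory.setIntegral_const, measureReal_def, volume_unitCube]
  simp

lemma integral_ge {h : (Fin d → Fin N → ℝ) → ℝ} (hc : Continuous h) {C : ℝ}
    (hlow : ∀ η, -C ≤ h η) {φ : (Fin N → ℝ) → Fin d → ℝ} {K : ℝ≥0}
    (hφ : LipschitzWith K φ) (ξ : Fin d → Fin N → ℝ) :
    -C ≤ ∫ y in unitCube N, h (ξ + gradMat φ y) := by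
  have h1 : ∫ _ in unitCube N, (-C : ℝ) = -C := by
    rw [MeasureTheory.setIntegral_const, measureReal_def, volume_unitCube]; simp
  rw [← h1]
  refine MeasureTheory.setIntegral_mono_on
    (MeasureTheory.integrableOn_const (by rw [volume_unitCube]; exact ENNReal.one_ne_top))
    (integrableOn_comp hc hφ ξ) measurableSet_unitCube (fun y _ => hlow _)

lemma bddBelow_qcEnv_set {h : (Fin d → Fin N → ℝ) → ℝ} (hc : Continuous h) {C : ℝ}
    (hlow : ∀ η, -C ≤ h η) (ξ : Fin d → Fin N → ℝ) :
    BddBelow {r | ∃ φ, TestFun φ ∧ r = ∫ y in unitCube N, h (ξ + gradMat φ y)} := by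
  refine ⟨-C, fun r hr => ?_⟩
  obtain ⟨φ, ⟨⟨K, hφ⟩, -⟩, rfl⟩ := hr
  exact integral_ge hc hlow hφ ξ

lemma qcEnv_le_self {h : (Fin d → Fin N → ℝ) → ℝ} (hc : Continuous h) {C : ℝ}
    (hlow : ∀ η, -C ≤ h η) (ξ : Fin d → Fin N → ℝ) : qcEnv h ξ ≤ h ξ :=
  csInf_le (bddBelow_qcEnv_set hc hlow ξ) (mem_qcEnv_set h ξ)

/-- The key one-sided estimate. -/
lemma one_sided (h g : (Fin d → Fin N → ℝ) → ℝ) (hc : Continuous h) (gc : Continuous g)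
    (C : ℝ) (hC : 0 < C)
    (hgrowth : ∀ η, (1/C) * ‖η‖ - C ≤ h η ∧ h η ≤ C * (1 + ‖η‖))
    (ggrowth : ∀ η, (1/C) * ‖η‖ - C ≤ g η ∧ g η ≤ C * (1 + ‖η‖))
    (ω : ℝ) (hω : 0 ≤ ω)
    (hdist : ∀ η, |h η - g η| ≤ ω * (1 + ‖η‖)) (ξ : Fin d → Fin N → ℝ) :
    qcEnv g ξ ≤ qcEnv h ξ + (1 + C + 2*C^2) * ω * (1 + ‖ξ‖) := by
  have hlow : ∀ η, -C ≤ h η := fun η => by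
    have := (hgrowth η).1
    have h0 : 0 ≤ (1/C) * ‖η‖ := by positivity
    linarith
  have glow : ∀ η, -C ≤ g η := fun η => by
    have := (ggrowth η).1
    have h0 : 0 ≤ (1/C) * ‖η‖ := by positivity
    linarith
  refine le_of_forall_pos_le_add fun ε hε => ?_
  set δ : ℝ := min 1 (ε / (1 + ω * C)) with hδdef
  have hden : (0:ℝ) < 1 + ω * C := by positivity
  have hδpos : 0 < δ := lt_min one_pos (div_pos hε hden)
  have hδ1 : δ ≤ 1 := min_le_left _ _
  have hδε : δ * (1 + ω * C) ≤ ε := by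
    have := min_le_right 1 (ε / (1 + ω * C))
    calc δ * (1 + ω * C) ≤ (ε / (1 + ω * C)) * (1 + ω * C) := by
          exact mul_le_mul_of_nonneg_right this hden.le
      _ = ε := div_mul_cancel₀ ε hden.ne'
  -- pick a near optimal test function for h
  obtain ⟨r, hrmem, hrlt⟩ := Real.lt_sInf_add_pos ⟨h ξ, mem_qcEnv_set h ξ⟩ hδpos
  obtain ⟨φ, hφtest, rfl⟩ := hrmem
  obtain ⟨K, hφ⟩ := hφtest.1
  -- pointwise estimate
  have hpt : ∀ η, g η ≤ (1 + ω * C) * h η + ω * (1 + C^2) := by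
    intro η
    have h1 := (hgrowth η).1
    have hd := (abs_le.1 (hdist η)).1
    have hnorm : ‖η‖ ≤ C * h η + C^2 := by
      have e : (1/C) * ‖η‖ = ‖η‖ / C := by ring
      rw [e] at h1
      have := (div_le_iff₀ hC).1 (by linarith : ‖η‖ / C ≤ h η + C)
      nlinarith
    nlinarith [mul_le_mul_of_nonneg_left hnorm hω]
  -- integral comparison
  have hInt1 : MeasureTheory.IntegrableOn (fun y => h (ξ + gradMat φ y)) (unitCube N) :=
    integrableOn_comp hc hφ ξ
  have hInt2 : MeasureTheory.IntegrableOn (fun y => g (ξ + gradMat φ y)) (unitCube N) :=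
    integrableOn_comp gc hφ ξ
  have hInt3 : MeasureTheory.IntegrableOn
      (fun y => (1 + ω * C) * h (ξ + gradMat φ y) + ω * (1 + C^2)) (unitCube N) :=
    (hInt1.const_mul _).add
      (MeasureTheory.integrableOn_const (by rw [volume_unitCube]; exact ENNReal.one_ne_top))
  have hmono : ∫ y in unitCube N, g (ξ + gradMat φ y) ≤
      ∫ y in unitCube N, ((1 + ω * C) * h (ξ + gradMat φ y) + ω * (1 + C^2)) :=
    MeasureTheory.setIntegral_mono_on hInt2 hInt3 measurableSet_unitCube (fun y _ => hpt _)
  have hcomp : ∫ y in unitCube N, ((1 + ω * C) * h (ξ + gradMat φ y) + ω * (1 + C^2)) =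
      (1 + ω * C) * (∫ y in unitCube N, h (ξ + gradMat φ y)) + ω * (1 + C^2) := by
    rw [MeasureTheory.integral_add (hInt1.const_mul _)
      (MeasureTheory.integrableOn_const (by rw [volume_unitCube]; exact ENNReal.one_ne_top)),
      MeasureTheory.integral_const_mul, MeasureTheory.setIntegral_const, measureReal_def, volume_unitCube]
    simp
  have hqg : qcEnv g ξ ≤ ∫ y in unitCube N, g (ξ + gradMat φ y) :=
    csInf_le (bddBelow_qcEnv_set gc glow ξ) ⟨φ, ⟨⟨K, hφ⟩, hφtest.2⟩, rfl⟩
  have hI1 : ∫ y in unitCube N, h (ξ + gradMat φ y) < qcEnv h ξ + δ := hrlt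
  have hA : qcEnv h ξ ≤ C * (1 + ‖ξ‖) :=
    (qcEnv_le_self hc hlow ξ).trans (hgrowth ξ).2
  have hAlow : -C ≤ qcEnv h ξ := by
    have := bddBelow_qcEnv_set hc hlow ξ
    exact le_csInf ⟨h ξ, mem_qcEnv_set h ξ⟩ (fun r hr => by
      obtain ⟨ψ, ⟨⟨K', hψ⟩, -⟩, rfl⟩ := hr
      exact integral_ge hc hlow hψ ξ) |>.trans_eq rfl
  have hξ0 : (0:ℝ) ≤ ‖ξ‖ := norm_nonneg ξ
  calc qcEnv g ξ ≤ (1 + ω * C) * (∫ y in unitCube N, h (ξ + gradMat φ y)) + ω * (1 + C^2) := by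
        rw [← hcomp]; exact hqg.trans hmono
    _ ≤ (1 + ω * C) * (qcEnv h ξ + δ) + ω * (1 + C^2) :=
        add_le_add_left (mul_le_mul_of_nonneg_left hI1.le hden.le) _
    _ ≤ qcEnv h ξ + (1 + C + 2*C^2) * ω * (1 + ‖ξ‖) + ε := by
        nlinarith [mul_le_mul_of_nonneg_left hA (mul_nonneg hω hC.le),
          mul_nonneg (mul_nonneg hω hC.le) hC.le,
          mul_nonneg hω hξ0, mul_nonneg (mul_nonneg hω hC.le) hξ0]

end Stmt1Aux

theorem stmt1 {N d : ℕ} (Ω : Set (Fin N → ℝ)) (hΩo : IsOpen Ω) (hΩb : Bornology.IsBounded Ω)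
    (W : (Fin N → ℝ) → (Fin d → ℝ) → (Fin d → Fin N → ℝ) → ℝ)
    (hWcont : Continuous fun p : (Fin N → ℝ) × (Fin d → ℝ) × (Fin d → Fin N → ℝ) =>
      W p.1 p.2.1 p.2.2)
    (C : ℝ) (hC : 0 < C)
    (hW : ∀ x ∈ Ω, ∀ (u : Fin d → ℝ) (ξ : Fin d → Fin N → ℝ),
      (1 / C) * ‖ξ‖ - C ≤ W x u ξ ∧ W x u ξ ≤ C * (1 + ‖ξ‖))
    (hmod : ∀ K : Set ((Fin N → ℝ) × (Fin d → ℝ)), IsCompact K → K ⊆ Ω ×ˢ Set.univ →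
      ∃ ω : ℝ → ℝ, Modulus ω ∧ ∀ p ∈ K, ∀ q ∈ K, ∀ ξ : Fin d → Fin N → ℝ,
        |W p.1 p.2 ξ - W q.1 q.2 ξ| ≤ ω (‖p.1 - q.1‖ + ‖p.2 - q.2‖) * (1 + ‖ξ‖)) :
    ∀ K : Set ((Fin N → ℝ) × (Fin d → ℝ)), IsCompact K → K ⊆ Ω ×ˢ Set.univ →
      ∃ ω' : ℝ → ℝ, Modulus ω' ∧ ∀ p ∈ K, ∀ q ∈ K, ∀ ξ : Fin d → Fin N → ℝ,
        |qcEnv (W p.1 p.2) ξ - qcEnv (W q.1 q.2) ξ| ≤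
          ω' (‖p.1 - q.1‖ + ‖p.2 - q.2‖) * (1 + ‖ξ‖) := by

  intro K hKc hKsub
  obtain ⟨ω, hωmod, hωest⟩ := hmod K hKc hKsub
  refine ⟨fun t => (1 + C + 2*C^2) * ω t,
    ⟨continuous_const.mul hωmod.1, by simp [hωmod.2.1],
      fun t => mul_nonneg (by positivity) (hωmod.2.2 t)⟩, ?_⟩
  intro p hp q hq ξ
  have hp1 : p.1 ∈ Ω := (hKsub hp).1
  have hq1 : q.1 ∈ Ω := (hKsub hq).1
  have hcont : ∀ x u, Continuous (W x u) := fun x u =>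
    hWcont.comp (continuous_const.prodMk (continuous_const.prodMk continuous_id))
  set t := ‖p.1 - q.1‖ + ‖p.2 - q.2‖ with ht
  have hωt : 0 ≤ ω t := hωmod.2.2 t
  have h1 := Stmt1Aux.one_sided (W p.1 p.2) (W q.1 q.2) (hcont _ _) (hcont _ _) C hC
    (hW p.1 hp1 p.2) (hW q.1 hq1 q.2) (ω t) hωt (fun η => hωest p hp q hq η) ξ
  have h2 := Stmt1Aux.one_sided (W q.1 q.2) (W p.1 p.2) (hcont _ _) (hcont _ _) C hC
    (hW q.1 hq1 q.2) (hW p.1 hp1 p.2) (ω t) hωt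
    (fun η => by rw [abs_sub_comm]; exact hωest p hp q hq η) ξ
  rw [abs_sub_le_iff]
  constructor <;> · beta_reduce; linarith
end

section
/- For a function W : Ω × ℝ^d × ℝ^{d×N} → [0,∞), the following two conditions are equivalent: (a) there exist α ∈ (0,1) and C, L > 0 such that whenever t|ξ| > L, |W^∞(x,u,ξ) - W(x,u,tξ)/t| ≤ C |ξ|^{1-α}/t^α for all (x,u,ξ) and t ∈ ℝ; (b) there exist α ∈ (0,1) and C > 0 such that |W^∞(x,u,ξ) - W(x,u,ξ)| ≤ C(1+|ξ|^{1-α}) for all (x,u,ξ) ∈ Ω × ℝ^d × ℝ^{d×N}, assuming W satisfies the linear growth and coercivity bounds (1/C)|ξ| - C ≤ W(x,u,ξ) ≤ C(1+|ξ|). -/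
open MeasureTheory Filter Set

noncomputable section

lemma recFn_smul {N d : ℕ} (h : (Fin d → Fin N → ℝ) → ℝ)
    (h0 : ∀ ζ, 0 ≤ h ζ) (B : ℝ) (hub : ∀ ζ, h ζ ≤ B * (1 + ‖ζ‖))
    (ξ : Fin d → Fin N → ℝ) (c : ℝ) (hc : 0 < c) :
    recFn h (c • ξ) = c * recFn h ξ := by
  have hB : 0 ≤ B := by
    have := (h0 0).trans (hub 0)
    simpa using this
  set g : ℝ → ℝ := fun t => h (t • ξ) / t with hgdef
  have hgub : ∀ t : ℝ, 1 ≤ t → g t ≤ B * (1 + ‖ξ‖) := by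
    intro t ht
    have ht0 : 0 < t := lt_of_lt_of_le one_pos ht
    have h1 : h (t • ξ) ≤ B * (1 + t * ‖ξ‖) := by
      have := hub (t • ξ)
      rwa [norm_smul, Real.norm_eq_abs, abs_of_pos ht0] at this
    have h2 : g t ≤ B * (1 + t * ‖ξ‖) / t :=
      div_le_div_of_nonneg_right h1 ht0.le |>.trans_eq rfl
    calc g t ≤ B * (1 + t * ‖ξ‖) / t := h2
      _ = B / t + B * ‖ξ‖ := by field_simp
      _ ≤ B * (1 + ‖ξ‖) := by
        have : B / t ≤ B := by
          rw [div_le_iff₀ ht0]; nlinarith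
        nlinarith [norm_nonneg ξ]
  have hglb : ∀ t : ℝ, 1 ≤ t → 0 ≤ g t :=
    fun t ht => div_nonneg (h0 _) (le_trans zero_le_one ht)
  have hmapkey : ∀ (u : ℝ → ℝ), limsup (fun t => u (t * c)) atTop = limsup u atTop := by
    intro u
    have h1 : (fun t : ℝ => u (t * c)) = u ∘ (OrderIso.mulRight₀ c hc) := by
      funext t; simp
    rw [h1]
    unfold Filter.limsup
    rw [← Filter.map_map, (OrderIso.mulRight₀ c hc).map_atTop]
  have hev : ∀ᶠ t : ℝ in atTop, 1 ≤ t * c := by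
    filter_upwards [eventually_ge_atTop (1 / c)] with t ht
    rw [div_le_iff₀ hc] at ht
    linarith
  have hbdd2 : IsBoundedUnder (· ≤ ·) atTop (fun t : ℝ => g (t * c)) :=
    isBoundedUnder_of_eventually_le (a := B * (1 + ‖ξ‖))
      (hev.mono fun t ht => hgub _ ht)
  have hcob2 : IsCoboundedUnder (· ≤ ·) atTop (fun t : ℝ => g (t * c)) :=
    isCoboundedUnder_le_of_eventually_le atTop (x := 0)
      (hev.mono fun t ht => hglb _ ht)
  have hmono : Monotone (fun r : ℝ => c * r) :=
    fun a b hab => by simp only []; nlinarith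
  have hcont : ContinuousAt (fun r : ℝ => c * r) (limsup (fun t : ℝ => g (t * c)) atTop) :=
    (continuous_const.mul continuous_id).continuousAt
  have step2 : c * limsup (fun t : ℝ => g (t * c)) atTop
      = limsup (fun t : ℝ => c * g (t * c)) atTop := by
    have := hmono.map_limsup_of_continuousAt (F := atTop) (fun t : ℝ => g (t * c))
      hcont hbdd2 hcob2
    exact this
  have step1 : recFn h (c • ξ) = limsup (fun t : ℝ => c * g (t * c)) atTop := by
    unfold recFn
    apply limsup_congr
    filter_upwards [eventually_gt_atTop (0:ℝ)] with t ht
    have hc0 : c ≠ 0 := hc.ne'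
    have ht0 : t ≠ 0 := ht.ne'
    rw [smul_smul]
    simp only [hgdef]
    field_simp
  rw [step1, ← step2, hmapkey g]
  rfl

lemma recFn_zero {N d : ℕ} (h : (Fin d → Fin N → ℝ) → ℝ) :
    recFn h (0 : Fin d → Fin N → ℝ) = 0 := by
  unfold recFn
  have : Tendsto (fun t : ℝ => h (t • (0 : Fin d → Fin N → ℝ)) / t) atTop (nhds 0) := by
    simp only [smul_zero]
    exact Tendsto.div_atTop tendsto_const_nhds tendsto_id
  exact this.limsup_eq

set_option maxHeartbeats 1000000 in
theorem stmt7 {N d : ℕ} (Ω : Set (Fin N → ℝ)) (hΩo : IsOpen Ω) (hΩb : Bornology.IsBounded Ω)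
    (W : (Fin N → ℝ) → (Fin d → ℝ) → (Fin d → Fin N → ℝ) → ℝ) (C₀ : ℝ) (hC₀ : 0 < C₀)
    (hWnonneg : ∀ x ∈ Ω, ∀ (u : Fin d → ℝ) (ξ : Fin d → Fin N → ℝ), 0 ≤ W x u ξ)
    (hW : ∀ x ∈ Ω, ∀ (u : Fin d → ℝ) (ξ : Fin d → Fin N → ℝ),
      (1 / C₀) * ‖ξ‖ - C₀ ≤ W x u ξ ∧ W x u ξ ≤ C₀ * (1 + ‖ξ‖)) :
    (∃ α C L : ℝ, α ∈ Set.Ioo (0:ℝ) 1 ∧ 0 < C ∧ 0 < L ∧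
      ∀ x ∈ Ω, ∀ (u : Fin d → ℝ) (ξ : Fin d → Fin N → ℝ), ∀ t : ℝ, t * ‖ξ‖ > L →
        |recFn (W x u) ξ - W x u (t • ξ) / t| ≤ C * ‖ξ‖ ^ ((1:ℝ) - α) / t ^ α) ↔
    (∃ α C : ℝ, α ∈ Set.Ioo (0:ℝ) 1 ∧ 0 < C ∧
      ∀ x ∈ Ω, ∀ (u : Fin d → ℝ) (ξ : Fin d → Fin N → ℝ),
        |recFn (W x u) ξ - W x u ξ| ≤ C * (1 + ‖ξ‖ ^ ((1:ℝ) - α))) := by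
  constructor
  · rintro ⟨α, C, L, ⟨hα0, hα1⟩, hC, hL, hA⟩
    set K : ℝ := C₀ * (1 + 2 * L) / 2 + C * (1 + L) + C₀ * (1 + L) + C + C₀ with hK
    have hKpos : 0 < K := by positivity
    have t1 : 0 < C₀ * (1 + 2 * L) / 2 := by positivity
    have t2 : 0 < C * (1 + L) := by positivity
    have t3 : 0 < C₀ * (1 + L) := by positivity
    have hCK : C ≤ K := by rw [hK]; linarith
    have hC₀K : C₀ ≤ K := by rw [hK]; linarith
    have hKbig : C * (1 + L) + C₀ * (1 + 2 * L) / 2 + C₀ * (1 + L) ≤ K := by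
      rw [hK]; linarith
    refine ⟨α, K, ⟨hα0, hα1⟩, hKpos, ?_⟩
    intro x hx u ξ
    have hrpow0 : (0:ℝ) ≤ ‖ξ‖ ^ ((1:ℝ) - α) := Real.rpow_nonneg (norm_nonneg _) _
    by_cases hξ : ξ = 0
    · subst hξ
      rw [recFn_zero, zero_sub, abs_neg, abs_of_nonneg (hWnonneg x hx u 0)]
      have := (hW x hx u 0).2
      simp only [norm_zero] at this ⊢
      rw [Real.zero_rpow (by linarith : (1:ℝ) - α ≠ 0)]
      norm_num at this ⊢
      linarith
    · have hξpos : 0 < ‖ξ‖ := norm_pos_iff.mpr hξ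
      rcases lt_or_ge L ‖ξ‖ with hbig | hsmall
      · have h1 := hA x hx u ξ 1 (by simpa using hbig)
        rw [Real.one_rpow, div_one, one_smul, div_one] at h1
        calc |recFn (W x u) ξ - W x u ξ| ≤ C * ‖ξ‖ ^ ((1:ℝ) - α) := h1
          _ ≤ K * (1 + ‖ξ‖ ^ ((1:ℝ) - α)) := by
              nlinarith [mul_le_mul_of_nonneg_right hCK hrpow0]
      · -- small case: use t = 2L/‖ξ‖
        set t : ℝ := 2 * L / ‖ξ‖ with htdef
        have ht2 : 2 ≤ t := by
          rw [htdef, le_div_iff₀ hξpos]; nlinarith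
        have ht0 : 0 < t := by linarith
        have htn : t * ‖ξ‖ = 2 * L := by
          rw [htdef]; field_simp
        have hkey := hA x hx u ξ t (by rw [htn]; linarith)
        -- bound W x u (t • ξ) / t
        have hWt : W x u (t • ξ) / t ≤ C₀ * (1 + 2 * L) / 2 := by
          have hub := (hW x hx u (t • ξ)).2
          rw [norm_smul, Real.norm_eq_abs, abs_of_pos ht0, htn] at hub
          have h1 : W x u (t • ξ) / t ≤ C₀ * (1 + 2 * L) / t :=
            div_le_div_of_nonneg_right hub ht0.le
          have h2 : C₀ * (1 + 2 * L) / t ≤ C₀ * (1 + 2 * L) / 2 :=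
            div_le_div_of_nonneg_left (by nlinarith) (by linarith) ht2
          linarith
        have hWt0 : 0 ≤ W x u (t • ξ) / t := div_nonneg (hWnonneg x hx u _) ht0.le
        -- bound C * ‖ξ‖^(1-α) / t^α
        have hrb : C * ‖ξ‖ ^ ((1:ℝ) - α) / t ^ α ≤ C * (1 + L) := by
          have hxb : ‖ξ‖ ^ ((1:ℝ) - α) ≤ 1 + L := by
            rcases le_or_gt ‖ξ‖ 1 with h | h
            · have := Real.rpow_le_one (norm_nonneg ξ) h (by linarith : (0:ℝ) ≤ 1 - α)
              linarith
            · have h1 : ‖ξ‖ ^ ((1:ℝ) - α) ≤ ‖ξ‖ ^ (1:ℝ) :=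
                Real.rpow_le_rpow_of_exponent_le h.le (by linarith)
              rw [Real.rpow_one] at h1
              linarith
          have htα : 1 ≤ t ^ α := Real.one_le_rpow (by linarith) hα0.le
          have htαpos : 0 < t ^ α := by linarith
          calc C * ‖ξ‖ ^ ((1:ℝ) - α) / t ^ α ≤ C * ‖ξ‖ ^ ((1:ℝ) - α) / 1 :=
                div_le_div_of_nonneg_left (by positivity) one_pos htα
            _ = C * ‖ξ‖ ^ ((1:ℝ) - α) := div_one _
            _ ≤ C * (1 + L) := by nlinarith
        have hWξ : W x u ξ ≤ C₀ * (1 + L) := by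
          have := (hW x hx u ξ).2
          nlinarith
        have hWξ0 : 0 ≤ W x u ξ := hWnonneg x hx u ξ
        have habs : |recFn (W x u) ξ| ≤ C * (1 + L) + C₀ * (1 + 2 * L) / 2 := by
          have h1 : |recFn (W x u) ξ| ≤
              |recFn (W x u) ξ - W x u (t • ξ) / t| + |W x u (t • ξ) / t| := by
            have := abs_sub_abs_le_abs_sub (recFn (W x u) ξ) (W x u (t • ξ) / t)
            have h2 := abs_add_le (recFn (W x u) ξ - W x u (t • ξ) / t) (W x u (t • ξ) / t)
            simpa using h2
          rw [abs_of_nonneg hWt0] at h1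
          linarith [hkey.trans hrb]
        calc |recFn (W x u) ξ - W x u ξ| ≤ |recFn (W x u) ξ| + |W x u ξ| := abs_sub _ _
          _ ≤ (C * (1 + L) + C₀ * (1 + 2 * L) / 2) + C₀ * (1 + L) := by
            rw [abs_of_nonneg hWξ0]; linarith
          _ ≤ K * (1 + ‖ξ‖ ^ ((1:ℝ) - α)) := by
              nlinarith [mul_le_mul_of_nonneg_right hCK hrpow0]
  · rintro ⟨α, C, ⟨hα0, hα1⟩, hC, hB⟩
    refine ⟨α, 2 * C, 1, ⟨hα0, hα1⟩, by linarith, one_pos, ?_⟩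
    intro x hx u ξ t ht
    have hξ0 : 0 < ‖ξ‖ := by
      rcases (norm_nonneg ξ).lt_or_eq with h | h
      · exact h
      · exfalso; rw [← h, mul_zero] at ht; linarith
    have ht0 : 0 < t := by
      by_contra h
      push_neg at h
      nlinarith
    have hhom := recFn_smul (W x u) (hWnonneg x hx u) C₀
      (fun ζ => (hW x hx u ζ).2) ξ t ht0
    have hb := hB x hx u (t • ξ)
    have heq : recFn (W x u) ξ - W x u (t • ξ) / t
        = (recFn (W x u) (t • ξ) - W x u (t • ξ)) / t := by
      rw [hhom]; field_simp
    rw [heq, abs_div, abs_of_pos ht0]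
    rw [norm_smul, Real.norm_eq_abs, abs_of_pos ht0] at hb
    have hmul : (t * ‖ξ‖) ^ ((1:ℝ) - α) = t ^ ((1:ℝ) - α) * ‖ξ‖ ^ ((1:ℝ) - α) :=
      Real.mul_rpow ht0.le (norm_nonneg _)
    rw [hmul] at hb
    set P : ℝ := t ^ α with hP
    have hPpos : 0 < P := Real.rpow_pos_of_pos ht0 α
    have htsub : t ^ ((1:ℝ) - α) = t / P := by
      rw [hP, Real.rpow_sub ht0, Real.rpow_one]
    set X : ℝ := ‖ξ‖ ^ ((1:ℝ) - α) with hX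
    have hX0 : 0 ≤ X := Real.rpow_nonneg (norm_nonneg _) _
    have hone : 1 ≤ t / P * X := by
      rw [← htsub, ← hmul]
      exact Real.one_le_rpow (le_of_lt ht) (by linarith)
    rw [htsub] at hb
    calc |recFn (W x u) (t • ξ) - W x u (t • ξ)| / t
        ≤ C * (1 + t / P * X) / t := div_le_div_of_nonneg_right hb ht0.le
      _ ≤ C * (2 * (t / P * X)) / t := by
          apply div_le_div_of_nonneg_right _ ht0.le
          nlinarith
      _ = 2 * C * X / P := by field_simp
end
end

section
/- Let W : Ω × ℝ^d × ℝ^{d×N} → [0,∞) be continuous, satisfying (1/C)|ξ| - C ≤ W(x,u,ξ) ≤ C(1+|ξ|) and the recession estimate: there exist α ∈ (0,1), C, L > 0 with |W^∞(x,u,ξ) - W(x,u,tξ)/t| ≤ C|ξ|^{1-α}/t^α whenever t|ξ| > L. Then for every (x,u,ξ), the quasiconvex envelope of the recession function equals the recession function of the quasiconvex envelope: Q(W^∞)(x,u,ξ) = (QW)^∞(x,u,ξ). -/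
open MeasureTheory Filter Set

noncomputable section

namespace Stmt8Aux

open Pointwise

variable {N d : ℕ}

lemma measurableSet_unitCube : MeasurableSet (unitCube N) :=
  MeasurableSet.univ_pi fun _ => measurableSet_Ioo

lemma volume_unitCube : volume (unitCube N) = 1 := by
  rw [unitCube, volume_pi_pi]
  simp [Real.volume_Ioo]

lemma volume_unitCube_toReal : (volume (unitCube N)).toReal = 1 := by
  rw [volume_unitCube]; rfl

lemma volume_unitCube_lt_top : volume (unitCube N) < ⊤ := by
  rw [volume_unitCube]; exact ENNReal.one_lt_top

lemma measurable_gradMat (φ : (Fin N → ℝ) → (Fin d → ℝ)) : Measurable (gradMat φ) := by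
  apply measurable_pi_lambda
  intro i
  apply measurable_pi_lambda
  intro j
  exact (measurable_pi_apply i).comp (measurable_fderiv_apply_const ℝ φ (Pi.single j 1))

lemma norm_gradMat_le {φ : (Fin N → ℝ) → (Fin d → ℝ)} {K : NNReal} (hφ : LipschitzWith K φ)
    (y : Fin N → ℝ) : ‖gradMat φ y‖ ≤ K := by
  rw [pi_norm_le_iff_of_nonneg K.coe_nonneg]
  intro i
  rw [pi_norm_le_iff_of_nonneg K.coe_nonneg]
  intro j
  calc ‖gradMat φ y i j‖ = ‖fderiv ℝ φ y (Pi.single j 1) i‖ := rfl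
    _ ≤ ‖fderiv ℝ φ y (Pi.single j 1)‖ := norm_le_pi_norm _ i
    _ ≤ ‖fderiv ℝ φ y‖ * ‖(Pi.single j 1 : Fin N → ℝ)‖ := (fderiv ℝ φ y).le_opNorm _
    _ ≤ K * 1 := by
        apply mul_le_mul (norm_fderiv_le_of_lipschitz ℝ hφ) ?_ (norm_nonneg _) K.coe_nonneg
        rw [Pi.norm_single]; simp
    _ = K := mul_one _

lemma testFun_zero : TestFun (N := N) (d := d) (fun _ => 0) :=
  ⟨⟨0, LipschitzWith.const' 0⟩, fun _ _ => rfl⟩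

lemma gradMat_zero : gradMat (N := N) (d := d) (fun _ => 0) = fun _ => 0 := by
  funext y i j
  simp [gradMat]

lemma gradMat_smul (c : ℝ) (hc : c ≠ 0) (φ : (Fin N → ℝ) → (Fin d → ℝ)) :
    gradMat (c • φ) = fun y => c • gradMat φ y := by
  funext y i j
  by_cases hd : DifferentiableAt ℝ φ y
  · have : fderiv ℝ (c • φ) y = c • fderiv ℝ φ y := fderiv_const_smul hd c
    simp [gradMat, this]
  · have hd2 : ¬ DifferentiableAt ℝ (c • φ) y := by
      intro hcon
      have h2 := hcon.const_smul c⁻¹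
      have : (fun z => c⁻¹ • (c • φ) z) = φ := by
        funext z
        simp [smul_smul, inv_mul_cancel₀ hc]
      rw [smul_smul, inv_mul_cancel₀ hc, one_smul] at h2
      exact hd h2
    simp [gradMat, fderiv_zero_of_not_differentiableAt hd,
      fderiv_zero_of_not_differentiableAt hd2]

lemma testFun_smul {φ : (Fin N → ℝ) → (Fin d → ℝ)} (hφ : TestFun φ) (c : ℝ) :
    TestFun (c • φ) := by
  obtain ⟨⟨K, hK⟩, hz⟩ := hφ
  refine ⟨⟨‖c‖₊ * K, ?_⟩, fun y hy => by simp [hz y hy]⟩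
  apply LipschitzWith.of_dist_le_mul
  intro a b
  have : dist ((c • φ) a) ((c • φ) b) = ‖c‖ * dist (φ a) (φ b) := by
    simp [Pi.smul_apply, dist_smul₀]
  rw [this]
  push_cast
  calc ‖c‖ * dist (φ a) (φ b) ≤ ‖c‖ * (K * dist a b) := by
        apply mul_le_mul_of_nonneg_left (hK.dist_le_mul a b) (norm_nonneg c)
    _ = ‖c‖ * K * dist a b := by ring


def Iset (G : (Fin d → Fin N → ℝ) → ℝ) (ξ : Fin d → Fin N → ℝ) : Set ℝ :=
  {r | ∃ φ, TestFun φ ∧ r = ∫ y in unitCube N, G (ξ + gradMat φ y)}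

lemma qcEnv_eq_sInf (G : (Fin d → Fin N → ℝ) → ℝ) (ξ : Fin d → Fin N → ℝ) :
    qcEnv G ξ = sInf (Iset G ξ) := rfl

lemma const_mem_Iset (G : (Fin d → Fin N → ℝ) → ℝ) (ξ : Fin d → Fin N → ℝ) :
    G ξ ∈ Iset G ξ := by
  refine ⟨fun _ => 0, testFun_zero, ?_⟩
  have : (fun y => G (ξ + gradMat (fun _ => (0 : Fin d → ℝ)) y)) = fun _ => G ξ := by
    funext y; rw [gradMat_zero]; simp
  rw [this, setIntegral_const, measureReal_def, volume_unitCube_toReal, one_smul]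

lemma Iset_nonempty (G : (Fin d → Fin N → ℝ) → ℝ) (ξ : Fin d → Fin N → ℝ) :
    (Iset G ξ).Nonempty := ⟨G ξ, const_mem_Iset G ξ⟩

lemma Iset_nonneg {G : (Fin d → Fin N → ℝ) → ℝ} (hG0 : ∀ ζ, 0 ≤ G ζ)
    {ξ : Fin d → Fin N → ℝ} : ∀ r ∈ Iset G ξ, 0 ≤ r := by
  rintro r ⟨φ, hφ, rfl⟩
  exact setIntegral_nonneg measurableSet_unitCube fun y _ => hG0 _

lemma bddBelow_Iset {G : (Fin d → Fin N → ℝ) → ℝ} (hG0 : ∀ ζ, 0 ≤ G ζ)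
    (ξ : Fin d → Fin N → ℝ) : BddBelow (Iset G ξ) :=
  ⟨0, fun r hr => Iset_nonneg hG0 r hr⟩

lemma qcEnv_nonneg {G : (Fin d → Fin N → ℝ) → ℝ} (hG0 : ∀ ζ, 0 ≤ G ζ)
    (ξ : Fin d → Fin N → ℝ) : 0 ≤ qcEnv G ξ :=
  le_csInf (Iset_nonempty G ξ) fun r hr => Iset_nonneg hG0 r hr

lemma qcEnv_le_integral {G : (Fin d → Fin N → ℝ) → ℝ} (hG0 : ∀ ζ, 0 ≤ G ζ)
    {φ : (Fin N → ℝ) → (Fin d → ℝ)} (hφ : TestFun φ) (ξ : Fin d → Fin N → ℝ) :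
    qcEnv G ξ ≤ ∫ y in unitCube N, G (ξ + gradMat φ y) :=
  csInf_le (bddBelow_Iset hG0 ξ) ⟨φ, hφ, rfl⟩

lemma qcEnv_le_self {G : (Fin d → Fin N → ℝ) → ℝ} (hG0 : ∀ ζ, 0 ≤ G ζ)
    (ξ : Fin d → Fin N → ℝ) : qcEnv G ξ ≤ G ξ :=
  csInf_le (bddBelow_Iset hG0 ξ) (const_mem_Iset G ξ)

lemma integrableOn_comp {G : (Fin d → Fin N → ℝ) → ℝ}
    (hG : Measurable G) {a : ℝ} (hGa : ∀ ζ, |G ζ| ≤ a * (1 + ‖ζ‖))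
    {φ : (Fin N → ℝ) → (Fin d → ℝ)} (hφ : TestFun φ) (ξ : Fin d → Fin N → ℝ) :
    IntegrableOn (fun y => G (ξ + gradMat φ y)) (unitCube N) := by
  obtain ⟨⟨K, hK⟩, -⟩ := hφ
  have hmeas : Measurable fun y => G (ξ + gradMat φ y) :=
    hG.comp (measurable_const.add (measurable_gradMat φ))
  have ha : 0 ≤ a := by
    have := hGa 0
    simp at this
    nlinarith [abs_nonneg (G 0)]
  refine Integrable.mono' (g := fun _ => a * (1 + (‖ξ‖ + K)))
    (integrableOn_const volume_unitCube_lt_top.ne) hmeas.aestronglyMeasurable ?_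
  refine Filter.Eventually.of_forall fun y => ?_
  have h1 : ‖ξ + gradMat φ y‖ ≤ ‖ξ‖ + K :=
    (norm_add_le _ _).trans (by gcongr; exact norm_gradMat_le hK y)
  calc ‖G (ξ + gradMat φ y)‖ = |G (ξ + gradMat φ y)| := rfl
    _ ≤ a * (1 + ‖ξ + gradMat φ y‖) := hGa _
    _ ≤ a * (1 + (‖ξ‖ + K)) := by gcongr

lemma integrableOn_norm {φ : (Fin N → ℝ) → (Fin d → ℝ)} (hφ : TestFun φ)
    (ξ : Fin d → Fin N → ℝ) :
    IntegrableOn (fun y => ‖ξ + gradMat φ y‖) (unitCube N) := by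
  refine integrableOn_comp (G := fun ζ => ‖ζ‖) continuous_norm.measurable (a := 1) ?_ hφ ξ
  intro ζ
  rw [abs_of_nonneg (norm_nonneg ζ), one_mul]
  linarith [norm_nonneg ζ]

lemma qcEnv_le_qcEnv {G₁ G₂ : (Fin d → Fin N → ℝ) → ℝ}
    (hm₁ : Measurable G₁) (hm₂ : Measurable G₂)
    (h₁0 : ∀ ζ, 0 ≤ G₁ ζ) (h₂0 : ∀ ζ, 0 ≤ G₂ ζ)
    {a : ℝ} (h₁a : ∀ ζ, G₁ ζ ≤ a * (1 + ‖ζ‖)) (h₂a : ∀ ζ, G₂ ζ ≤ a * (1 + ‖ζ‖))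
    {c C₀ : ℝ} (hc : 0 ≤ c) (hC₀ : 0 ≤ C₀) (hcoer : ∀ ζ, ‖ζ‖ ≤ c * G₂ ζ + C₀)
    {ε : ℝ} (hε : 0 ≤ ε) (hdiff : ∀ ζ, |G₁ ζ - G₂ ζ| ≤ ε * (1 + ‖ζ‖))
    (ξ : Fin d → Fin N → ℝ) :
    qcEnv G₁ ξ ≤ qcEnv G₂ ξ + ε * (1 + c * qcEnv G₂ ξ + C₀) := by
  have habs₁ : ∀ ζ, |G₁ ζ| ≤ a * (1 + ‖ζ‖) := fun ζ => by
    rw [abs_of_nonneg (h₁0 ζ)]; exact h₁a ζ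
  have habs₂ : ∀ ζ, |G₂ ζ| ≤ a * (1 + ‖ζ‖) := fun ζ => by
    rw [abs_of_nonneg (h₂0 ζ)]; exact h₂a ζ
  refine le_of_forall_pos_le_add fun δ hδ => ?_
  set q₂ := qcEnv G₂ ξ with hq₂
  have hden : (0:ℝ) < 1 + ε * c := by positivity
  set η := δ / (1 + ε * c) with hη
  have hηpos : 0 < η := div_pos hδ hden
  obtain ⟨r, hrS, hrlt⟩ := Real.lt_sInf_add_pos (Iset_nonempty G₂ ξ) hηpos
  rw [← qcEnv_eq_sInf] at hrlt
  obtain ⟨φ, hφ, rfl⟩ := hrS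
  have int₁ := integrableOn_comp hm₁ habs₁ hφ ξ
  have int₂ := integrableOn_comp hm₂ habs₂ hφ ξ
  have intn := integrableOn_norm hφ ξ
  have intc : IntegrableOn (fun _ : Fin N → ℝ => (1:ℝ)) (unitCube N) :=
    integrableOn_const volume_unitCube_lt_top.ne
  -- step 1
  have step1 : qcEnv G₁ ξ ≤ ∫ y in unitCube N, G₁ (ξ + gradMat φ y) :=
    qcEnv_le_integral h₁0 hφ ξ
  -- step 2
  have step2 : (∫ y in unitCube N, G₁ (ξ + gradMat φ y)) ≤
      (∫ y in unitCube N, G₂ (ξ + gradMat φ y)) +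
      ε * (1 + ∫ y in unitCube N, ‖ξ + gradMat φ y‖) := by
    have hptw : ∀ y, G₁ (ξ + gradMat φ y) ≤
        G₂ (ξ + gradMat φ y) + ε * (1 + ‖ξ + gradMat φ y‖) := by
      intro y
      have := hdiff (ξ + gradMat φ y)
      have h' := (abs_le.1 this).2
      linarith
    have intm : IntegrableOn (fun y => (1:ℝ) + ‖ξ + gradMat φ y‖) (unitCube N) :=
      intc.add intn
    have intm' : IntegrableOn (fun y => ε * ((1:ℝ) + ‖ξ + gradMat φ y‖)) (unitCube N) :=
      intm.const_mul ε
    have intr : IntegrableOn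
        (fun y => G₂ (ξ + gradMat φ y) + ε * (1 + ‖ξ + gradMat φ y‖)) (unitCube N) :=
      int₂.add intm'
    calc (∫ y in unitCube N, G₁ (ξ + gradMat φ y))
        ≤ ∫ y in unitCube N,
            (G₂ (ξ + gradMat φ y) + ε * (1 + ‖ξ + gradMat φ y‖)) :=
          integral_mono int₁ intr hptw
      _ = (∫ y in unitCube N, G₂ (ξ + gradMat φ y)) +
          ε * (1 + ∫ y in unitCube N, ‖ξ + gradMat φ y‖) := by
          rw [integral_add int₂ intm', integral_const_mul, integral_add intc intn,
            setIntegral_const, measureReal_def, volume_unitCube_toReal, smul_eq_mul, mul_one]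
  -- step 3 : coercivity
  have step3 : (∫ y in unitCube N, ‖ξ + gradMat φ y‖) ≤
      c * (∫ y in unitCube N, G₂ (ξ + gradMat φ y)) + C₀ := by
    have intcc : IntegrableOn (fun _ : Fin N → ℝ => C₀) (unitCube N) :=
      integrableOn_const volume_unitCube_lt_top.ne
    have intm : IntegrableOn (fun y => c * G₂ (ξ + gradMat φ y)) (unitCube N) :=
      int₂.const_mul c
    have intr : IntegrableOn
        (fun y => c * G₂ (ξ + gradMat φ y) + C₀) (unitCube N) :=
      intm.add intcc
    calc (∫ y in unitCube N, ‖ξ + gradMat φ y‖)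
        ≤ ∫ y in unitCube N, (c * G₂ (ξ + gradMat φ y) + C₀) :=
          integral_mono intn intr fun y => hcoer _
      _ = c * (∫ y in unitCube N, G₂ (ξ + gradMat φ y)) + C₀ := by
          rw [integral_add intm intcc, integral_const_mul, setIntegral_const, measureReal_def,
            volume_unitCube_toReal, smul_eq_mul, one_mul]
  set r := ∫ y in unitCube N, G₂ (ξ + gradMat φ y) with hr
  have hr0 : 0 ≤ r := setIntegral_nonneg measurableSet_unitCube fun y _ => h₂0 _
  have key : qcEnv G₁ ξ ≤ r + ε * (1 + c * r + C₀) := by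
    have h2 := step2.trans (by nlinarith [step3] : (∫ y in unitCube N, G₂ (ξ + gradMat φ y)) +
      ε * (1 + ∫ y in unitCube N, ‖ξ + gradMat φ y‖) ≤ r + ε * (1 + c * r + C₀))
    exact step1.trans h2
  have hmono : r + ε * (1 + c * r + C₀) ≤ (q₂ + η) + ε * (1 + c * (q₂ + η) + C₀) := by
    have hrle : r ≤ q₂ + η := hrlt.le
    nlinarith [mul_le_mul_of_nonneg_left hrle (mul_nonneg hε hc)]
  have hfin : (q₂ + η) + ε * (1 + c * (q₂ + η) + C₀)
      = q₂ + ε * (1 + c * q₂ + C₀) + η * (1 + ε * c) := by ring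
  have hηδ : η * (1 + ε * c) = δ := by
    rw [hη, div_mul_cancel₀ _ hden.ne']
  calc qcEnv G₁ ξ ≤ r + ε * (1 + c * r + C₀) := key
    _ ≤ (q₂ + η) + ε * (1 + c * (q₂ + η) + C₀) := hmono
    _ = q₂ + ε * (1 + c * q₂ + C₀) + δ := by rw [hfin, hηδ]

lemma qcEnv_smul (h : (Fin d → Fin N → ℝ) → ℝ) (ξ : Fin d → Fin N → ℝ)
    {t : ℝ} (ht : 0 < t) :
    qcEnv h (t • ξ) = t * qcEnv (fun ζ => h (t • ζ) / t) ξ := by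
  have hint : ∀ φ : (Fin N → ℝ) → (Fin d → ℝ), ∀ ψ : (Fin N → ℝ) → (Fin d → ℝ),
      ψ = t⁻¹ • φ →
      (∫ y in unitCube N, h (t • ξ + gradMat φ y)) =
        t * ∫ y in unitCube N, h (t • (ξ + gradMat ψ y)) / t := by
    intro φ ψ hψ
    have hgr : ∀ y, t • (ξ + gradMat ψ y) = t • ξ + gradMat φ y := by
      intro y
      rw [hψ, gradMat_smul t⁻¹ (inv_ne_zero ht.ne') φ]
      rw [smul_add, smul_smul, mul_inv_cancel₀ ht.ne', one_smul]
    simp_rw [hgr]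
    rw [integral_div, mul_div_cancel₀ _ ht.ne']
  have hset : Iset h (t • ξ) = (fun r => t * r) '' Iset (fun ζ => h (t • ζ) / t) ξ := by
    ext r
    constructor
    · rintro ⟨φ, hφ, rfl⟩
      exact ⟨∫ y in unitCube N, h (t • (ξ + gradMat (t⁻¹ • φ) y)) / t,
        ⟨t⁻¹ • φ, testFun_smul hφ t⁻¹, rfl⟩, (hint φ _ rfl).symm⟩
    · rintro ⟨r', ⟨φ, hφ, rfl⟩, rfl⟩
      refine ⟨t • φ, testFun_smul hφ t, ?_⟩
      exact (hint (t • φ) φ (by rw [smul_smul, inv_mul_cancel₀ ht.ne', one_smul])).symm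
  rw [qcEnv_eq_sInf, hset, qcEnv_eq_sInf]
  have himg : ((fun r => t * r) '' Iset (fun ζ => h (t • ζ) / t) ξ)
      = t • (Iset (fun ζ => h (t • ζ) / t) ξ) := by
    ext z
    simp only [Set.mem_image, Set.mem_smul_set, smul_eq_mul]
  rw [himg, Real.sInf_smul_of_nonneg ht.le, smul_eq_mul]

end Stmt8Aux

theorem stmt8 {N d : ℕ} (Ω : Set (Fin N → ℝ)) (hΩo : IsOpen Ω) (hΩb : Bornology.IsBounded Ω)
    (W : (Fin N → ℝ) → (Fin d → ℝ) → (Fin d → Fin N → ℝ) → ℝ)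
    (hWcont : Continuous fun p : (Fin N → ℝ) × (Fin d → ℝ) × (Fin d → Fin N → ℝ) =>
      W p.1 p.2.1 p.2.2)
    (hWnonneg : ∀ x ∈ Ω, ∀ (u : Fin d → ℝ) (ξ : Fin d → Fin N → ℝ), 0 ≤ W x u ξ)
    (C : ℝ) (hC : 0 < C)
    (hW : ∀ x ∈ Ω, ∀ (u : Fin d → ℝ) (ξ : Fin d → Fin N → ℝ),
      (1 / C) * ‖ξ‖ - C ≤ W x u ξ ∧ W x u ξ ≤ C * (1 + ‖ξ‖))
    (α L : ℝ) (hα : α ∈ Set.Ioo (0:ℝ) 1) (hL : 0 < L)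
    (hrec : ∀ x ∈ Ω, ∀ (u : Fin d → ℝ) (ξ : Fin d → Fin N → ℝ), ∀ t : ℝ, t * ‖ξ‖ > L →
      |recFn (W x u) ξ - W x u (t • ξ) / t| ≤ C * ‖ξ‖ ^ ((1:ℝ) - α) / t ^ α) :
    ∀ x ∈ Ω, ∀ (u : Fin d → ℝ) (ξ : Fin d → Fin N → ℝ),
      qcEnv (recFn (W x u)) ξ = recFn (qcEnv (W x u)) ξ := by
  intro x hx u ξ
  obtain ⟨hα0, hα1⟩ := hα
  set h : (Fin d → Fin N → ℝ) → ℝ := W x u with hh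
  have hcont : Continuous h := by
    have heq : h = (fun p : (Fin N → ℝ) × (Fin d → ℝ) × (Fin d → Fin N → ℝ) =>
        W p.1 p.2.1 p.2.2) ∘ (fun ζ => (x, u, ζ)) := rfl
    rw [heq]
    exact hWcont.comp (continuous_const.prodMk (continuous_const.prodMk continuous_id))
  have h0 : ∀ ζ, 0 ≤ h ζ := hWnonneg x hx u
  have hub : ∀ ζ, h ζ ≤ C * (1 + ‖ζ‖) := fun ζ => (hW x hx u ζ).2
  have hlb : ∀ ζ, (1 / C) * ‖ζ‖ - C ≤ h ζ := fun ζ => (hW x hx u ζ).1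
  set g : (Fin d → Fin N → ℝ) → ℝ := recFn h with hg
  -- tendsto characterization of the recession function
  have htend : ∀ ζ, Filter.Tendsto (fun t : ℝ => h (t • ζ) / t) atTop (nhds (g ζ)) := by
    intro ζ
    rcases eq_or_ne ζ 0 with rfl | hζ
    · have hfun : (fun t : ℝ => h (t • (0 : Fin d → Fin N → ℝ)) / t) = fun t : ℝ => h 0 / t := by
        funext t; rw [smul_zero]
      have hT : Filter.Tendsto (fun t : ℝ => h 0 / t) atTop (nhds 0) :=
        tendsto_const_nhds.div_atTop tendsto_id
      have hrec0 : g 0 = 0 := by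
        rw [hg]
        show Filter.limsup (fun t : ℝ => h (t • (0 : Fin d → Fin N → ℝ)) / t) atTop = 0
        rw [hfun]
        exact hT.limsup_eq
      rw [hrec0, hfun]
      exact hT
    · have hζ' : 0 < ‖ζ‖ := norm_pos_iff.2 hζ
      have h0' : Filter.Tendsto (fun t : ℝ => C * ‖ζ‖ ^ ((1:ℝ) - α) / t ^ α) atTop (nhds 0) :=
        Filter.Tendsto.div_atTop tendsto_const_nhds (tendsto_rpow_atTop hα0)
      rw [tendsto_iff_dist_tendsto_zero]
      apply squeeze_zero' (Filter.Eventually.of_forall fun t => dist_nonneg) ?_ h0'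
      filter_upwards [eventually_gt_atTop (L / ‖ζ‖)] with t ht
      have hgt : t * ‖ζ‖ > L := by
        rw [gt_iff_lt, ← div_lt_iff₀ hζ']
        exact ht
      have hb := hrec x hx u ζ t hgt
      rw [Real.dist_eq, abs_sub_comm]
      exact hb
  have g0 : ∀ ζ, 0 ≤ g ζ := by
    intro ζ
    refine ge_of_tendsto (htend ζ) ?_
    filter_upwards [eventually_gt_atTop 0] with t ht
    exact div_nonneg (h0 _) ht.le
  have gub : ∀ ζ, g ζ ≤ C * ‖ζ‖ := by
    intro ζ
    have h1 : Filter.Tendsto (fun t : ℝ => C / t) atTop (nhds 0) :=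
      tendsto_const_nhds.div_atTop tendsto_id
    have haux : Filter.Tendsto (fun t : ℝ => C / t + C * ‖ζ‖) atTop (nhds (C * ‖ζ‖)) := by
      have := h1.add (tendsto_const_nhds (x := C * ‖ζ‖) (f := atTop))
      simpa using this
    refine le_of_tendsto_of_tendsto (htend ζ) haux ?_
    filter_upwards [eventually_ge_atTop 1] with t ht
    have ht0 : (0:ℝ) < t := lt_of_lt_of_le one_pos ht
    have hns : ‖t • ζ‖ = t * ‖ζ‖ := by rw [norm_smul, Real.norm_eq_abs, abs_of_pos ht0]
    have hb : h (t • ζ) ≤ C * (1 + t * ‖ζ‖) := by rw [← hns]; exact hub _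
    have hq : C * (1 + t * ‖ζ‖) / t = C / t + C * ‖ζ‖ := by field_simp
    calc h (t • ζ) / t ≤ C * (1 + t * ‖ζ‖) / t := by gcongr
      _ = C / t + C * ‖ζ‖ := hq
  have glb : ∀ ζ, ‖ζ‖ / C ≤ g ζ := by
    intro ζ
    have h1 : Filter.Tendsto (fun t : ℝ => C / t) atTop (nhds 0) :=
      tendsto_const_nhds.div_atTop tendsto_id
    have haux : Filter.Tendsto (fun t : ℝ => ‖ζ‖ / C - C / t) atTop (nhds (‖ζ‖ / C)) := by
      have := (tendsto_const_nhds (x := ‖ζ‖ / C) (f := atTop)).sub h1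
      simpa using this
    refine le_of_tendsto_of_tendsto haux (htend ζ) ?_
    filter_upwards [eventually_ge_atTop 1] with t ht
    have ht0 : (0:ℝ) < t := lt_of_lt_of_le one_pos ht
    have hns : ‖t • ζ‖ = t * ‖ζ‖ := by rw [norm_smul, Real.norm_eq_abs, abs_of_pos ht0]
    have hb : (1 / C) * ‖t • ζ‖ - C ≤ h (t • ζ) := hlb _
    rw [hns] at hb
    have hq : (1 / C * (t * ‖ζ‖) - C) / t = ‖ζ‖ / C - C / t := by field_simp
    calc ‖ζ‖ / C - C / t = (1 / C * (t * ‖ζ‖) - C) / t := hq.symm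
      _ ≤ h (t • ζ) / t := by gcongr
  have gquant : ∀ t : ℝ, 1 ≤ t → ∀ ζ,
      |g ζ - h (t • ζ) / t| ≤ C * (1 + 2 * L) / t ^ α * (1 + ‖ζ‖) := by
    intro t ht ζ
    have ht0 : (0:ℝ) < t := lt_of_lt_of_le one_pos ht
    have htα : (0:ℝ) < t ^ α := Real.rpow_pos_of_pos ht0 α
    have htα1 : t ^ α ≤ t := by
      calc t ^ α ≤ t ^ (1:ℝ) := Real.rpow_le_rpow_of_exponent_le ht (le_of_lt hα1)
        _ = t := Real.rpow_one t
    have hns : ‖t • ζ‖ = t * ‖ζ‖ := by rw [norm_smul, Real.norm_eq_abs, abs_of_pos ht0]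
    by_cases hcase : t * ‖ζ‖ > L
    · have hb := hrec x hx u ζ t hcase
      have hpow : ‖ζ‖ ^ ((1:ℝ) - α) ≤ 1 + ‖ζ‖ := by
        rcases le_total ‖ζ‖ 1 with h1 | h1
        · have h2 : ‖ζ‖ ^ ((1:ℝ) - α) ≤ 1 :=
            Real.rpow_le_one (norm_nonneg ζ) h1 (by linarith)
          linarith [norm_nonneg ζ]
        · have h2 : ‖ζ‖ ^ ((1:ℝ) - α) ≤ ‖ζ‖ ^ (1:ℝ) :=
            Real.rpow_le_rpow_of_exponent_le h1 (by linarith)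
          rw [Real.rpow_one] at h2
          linarith
      calc |g ζ - h (t • ζ) / t| ≤ C * ‖ζ‖ ^ ((1:ℝ) - α) / t ^ α := hb
        _ = C / t ^ α * ‖ζ‖ ^ ((1:ℝ) - α) := by ring
        _ ≤ C / t ^ α * (1 + ‖ζ‖) := by
            apply mul_le_mul_of_nonneg_left hpow (div_nonneg hC.le htα.le)
        _ ≤ C * (1 + 2 * L) / t ^ α * (1 + ‖ζ‖) := by
            gcongr
            linarith [mul_nonneg hC.le hL.le]
    · push_neg at hcase
      have hζL : ‖ζ‖ ≤ L / t := (le_div_iff₀ ht0).2 (by linarith)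
      have hg1 : g ζ ≤ C * L / t := by
        calc g ζ ≤ C * ‖ζ‖ := gub ζ
          _ ≤ C * (L / t) := mul_le_mul_of_nonneg_left hζL hC.le
          _ = C * L / t := by ring
      have hh1 : h (t • ζ) / t ≤ C * (1 + L) / t := by
        have hb : h (t • ζ) ≤ C * (1 + t * ‖ζ‖) := by rw [← hns]; exact hub _
        have h2 : h (t • ζ) ≤ C * (1 + L) := by
          linarith [hb, mul_le_mul_of_nonneg_left hcase hC.le]
        gcongr
      have hgz : 0 ≤ g ζ := g0 ζ
      have hhz : 0 ≤ h (t • ζ) / t := div_nonneg (h0 _) ht0.le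
      have habs : |g ζ - h (t • ζ) / t| ≤ C * (1 + 2 * L) / t := by
        rw [abs_le]
        have hd1 : (0:ℝ) ≤ C * L / t := by positivity
        have hd2 : (0:ℝ) ≤ C * (1 + L) / t := by positivity
        have he : C * L / t + C * (1 + L) / t = C * (1 + 2 * L) / t := by ring
        constructor <;> linarith
      calc |g ζ - h (t • ζ) / t| ≤ C * (1 + 2 * L) / t := habs
        _ ≤ C * (1 + 2 * L) / t ^ α :=
            div_le_div_of_nonneg_left (by linarith [mul_nonneg hC.le hL.le]) htα htα1
        _ ≤ C * (1 + 2 * L) / t ^ α * (1 + ‖ζ‖) := by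
            apply le_mul_of_one_le_right
              (div_nonneg (by linarith [mul_nonneg hC.le hL.le]) htα.le)
            linarith [norm_nonneg ζ]
  have gmeas : Measurable g := by
    have hseq : ∀ n : ℕ, Measurable fun ζ : Fin d → Fin N → ℝ =>
        h (((n:ℝ) + 1) • ζ) / ((n:ℝ) + 1) := fun n =>
      ((hcont.comp (continuous_const_smul ((n:ℝ) + 1))).div_const _).measurable
    apply measurable_of_tendsto_metrizable hseq
    rw [tendsto_pi_nhds]
    intro ζ
    have hnat : Filter.Tendsto (fun n : ℕ => (n:ℝ) + 1) atTop atTop :=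
      tendsto_atTop_add_const_right atTop 1 tendsto_natCast_atTop_atTop
    exact (htend ζ).comp hnat
  -- uniform bounds used in the comparison
  have gub' : ∀ ζ, g ζ ≤ C * (1 + ‖ζ‖) := fun ζ =>
    (gub ζ).trans (by linarith [hC.le])
  have gcoer : ∀ ζ, ‖ζ‖ ≤ C * g ζ + C * C := by
    intro ζ
    have hb := glb ζ
    have h2 := mul_le_mul_of_nonneg_left hb hC.le
    have h3 : C * (‖ζ‖ / C) = ‖ζ‖ := by field_simp
    linarith [h2, h3, mul_pos hC hC]
  set Bc : ℝ := 1 + C * (C * (1 + ‖ξ‖)) + C * C with hBc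
  have key : ∀ t : ℝ, 1 ≤ t →
      |qcEnv h (t • ξ) / t - qcEnv g ξ| ≤ C * (1 + 2 * L) * Bc / t ^ α := by
    intro t ht
    have ht0 : (0:ℝ) < t := lt_of_lt_of_le one_pos ht
    have htα : (0:ℝ) < t ^ α := Real.rpow_pos_of_pos ht0 α
    set F : (Fin d → Fin N → ℝ) → ℝ := fun ζ => h (t • ζ) / t with hF
    have Fmeas : Measurable F := ((hcont.comp (continuous_const_smul t)).div_const t).measurable
    have F0 : ∀ ζ, 0 ≤ F ζ := fun ζ => div_nonneg (h0 _) ht0.le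
    have Fub : ∀ ζ, F ζ ≤ C * (1 + ‖ζ‖) := by
      intro ζ
      have hns : ‖t • ζ‖ = t * ‖ζ‖ := by rw [norm_smul, Real.norm_eq_abs, abs_of_pos ht0]
      have h1 : h (t • ζ) ≤ C * (1 + t * ‖ζ‖) := by rw [← hns]; exact hub _
      rw [hF]
      show h (t • ζ) / t ≤ C * (1 + ‖ζ‖)
      rw [div_le_iff₀ ht0]
      linarith [h1, mul_le_mul_of_nonneg_left ht hC.le]
    have Fcoer : ∀ ζ, ‖ζ‖ ≤ C * F ζ + C * C := by
      intro ζ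
      have hns : ‖t • ζ‖ = t * ‖ζ‖ := by rw [norm_smul, Real.norm_eq_abs, abs_of_pos ht0]
      have h1 : (1 / C) * ‖t • ζ‖ - C ≤ h (t • ζ) := hlb _
      rw [hns] at h1
      have h2 : (1 / C) * ‖ζ‖ - C ≤ F ζ := by
        rw [hF]
        show (1 / C) * ‖ζ‖ - C ≤ h (t • ζ) / t
        rw [le_div_iff₀ ht0]
        linarith [h1, mul_le_mul_of_nonneg_left ht hC.le]
      have h3 := mul_le_mul_of_nonneg_left h2 hC.le
      have h4 : C * ((1 / C) * ‖ζ‖) = ‖ζ‖ := by field_simp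
      linarith [h3, h4, mul_pos hC hC]
    have hdiff1 : ∀ ζ, |g ζ - F ζ| ≤ C * (1 + 2 * L) / t ^ α * (1 + ‖ζ‖) := fun ζ =>
      gquant t ht ζ
    have hdiff2 : ∀ ζ, |F ζ - g ζ| ≤ C * (1 + 2 * L) / t ^ α * (1 + ‖ζ‖) := fun ζ => by
      rw [abs_sub_comm]; exact hdiff1 ζ
    have hε0 : (0:ℝ) ≤ C * (1 + 2 * L) / t ^ α :=
      div_nonneg (by linarith [mul_nonneg hC.le hL.le]) htα.le
    have hCC : (0:ℝ) ≤ C * C := mul_nonneg hC.le hC.le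
    have ineq1 := Stmt8Aux.qcEnv_le_qcEnv gmeas Fmeas g0 F0 gub' Fub hC.le hCC Fcoer hε0 hdiff1 ξ
    have ineq2 := Stmt8Aux.qcEnv_le_qcEnv Fmeas gmeas F0 g0 Fub gub' hC.le hCC gcoer hε0 hdiff2 ξ
    have hqF_le : qcEnv F ξ ≤ C * (1 + ‖ξ‖) := (Stmt8Aux.qcEnv_le_self F0 ξ).trans (Fub ξ)
    have hqF_0 : 0 ≤ qcEnv F ξ := Stmt8Aux.qcEnv_nonneg F0 ξ
    have hqg_le : qcEnv g ξ ≤ C * (1 + ‖ξ‖) := (Stmt8Aux.qcEnv_le_self g0 ξ).trans (gub' ξ)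
    have hqg_0 : 0 ≤ qcEnv g ξ := Stmt8Aux.qcEnv_nonneg g0 ξ
    have hscale : qcEnv h (t • ξ) / t = qcEnv F ξ := by
      rw [Stmt8Aux.qcEnv_smul h ξ ht0, mul_div_cancel_left₀ _ ht0.ne']
    rw [hscale, abs_le]
    have hεB1 : C * (1 + 2 * L) / t ^ α * (1 + C * qcEnv F ξ + C * C)
        ≤ C * (1 + 2 * L) * Bc / t ^ α := by
      have hle : 1 + C * qcEnv F ξ + C * C ≤ Bc := by
        rw [hBc]
        have := mul_le_mul_of_nonneg_left hqF_le hC.le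
        linarith
      calc C * (1 + 2 * L) / t ^ α * (1 + C * qcEnv F ξ + C * C)
          ≤ C * (1 + 2 * L) / t ^ α * Bc := mul_le_mul_of_nonneg_left hle hε0
        _ = C * (1 + 2 * L) * Bc / t ^ α := by ring
    have hεB2 : C * (1 + 2 * L) / t ^ α * (1 + C * qcEnv g ξ + C * C)
        ≤ C * (1 + 2 * L) * Bc / t ^ α := by
      have hle : 1 + C * qcEnv g ξ + C * C ≤ Bc := by
        rw [hBc]
        have := mul_le_mul_of_nonneg_left hqg_le hC.le
        linarith
      calc C * (1 + 2 * L) / t ^ α * (1 + C * qcEnv g ξ + C * C)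
          ≤ C * (1 + 2 * L) / t ^ α * Bc := mul_le_mul_of_nonneg_left hle hε0
        _ = C * (1 + 2 * L) * Bc / t ^ α := by ring
    constructor
    · linarith
    · linarith
  have hT : Filter.Tendsto (fun t : ℝ => qcEnv h (t • ξ) / t) atTop (nhds (qcEnv g ξ)) := by
    rw [tendsto_iff_dist_tendsto_zero]
    have hlim : Filter.Tendsto (fun t : ℝ => C * (1 + 2 * L) * Bc / t ^ α) atTop (nhds 0) :=
      Filter.Tendsto.div_atTop tendsto_const_nhds (tendsto_rpow_atTop hα0)
    apply squeeze_zero' (Filter.Eventually.of_forall fun t => dist_nonneg) ?_ hlim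
    filter_upwards [eventually_ge_atTop 1] with t ht
    rw [Real.dist_eq]
    exact key t ht
  show qcEnv g ξ = recFn (qcEnv h) ξ
  exact (hT.limsup_eq).symm

end
end

section
/- Let φ : Ω × ℝ^d × ℝ^m → ℝ be a Carathéodory function satisfying C⁻¹|v|^q - C ≤ φ(x,u,v) ≤ C(1+|u|^p+|v|^q), and suppose additionally |φ(x,u,v) - φ(x,u',v)| ≤ ω'(|u-u'|)(1+|v|) for a modulus of continuity ω'. Then the convex envelope Cφ(x,·,·) : ℝ^d × ℝ^m → ℝ is continuous for a.e. x ∈ Ω. -/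
open MeasureTheory Filter Set

noncomputable section

open Topology

namespace Stmt11Aux

variable {m : ℕ}

def S (g : (Fin m → ℝ) → ℝ) (v : Fin m → ℝ) : Set ℝ :=
  {r | ∃ h : (Fin m → ℝ) → ℝ, ConvexOn ℝ Set.univ h ∧ (∀ w, h w ≤ g w) ∧ r = h v}

lemma convEnv_eq (g : (Fin m → ℝ) → ℝ) (v : Fin m → ℝ) : convEnv g v = sSup (S g v) := rfl

lemma bddAbove_S (g : (Fin m → ℝ) → ℝ) (v : Fin m → ℝ) : BddAbove (S g v) :=
  ⟨g v, by rintro r ⟨h, _, hle, rfl⟩; exact hle v⟩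

lemma const_mem_S {g : (Fin m → ℝ) → ℝ} {c : ℝ} (hc : ∀ w, c ≤ g w) (v : Fin m → ℝ) :
    c ∈ S g v :=
  ⟨fun _ => c, convexOn_const c convex_univ, hc, rfl⟩

lemma le_convEnv {g : (Fin m → ℝ) → ℝ} {h : (Fin m → ℝ) → ℝ}
    (hconv : ConvexOn ℝ Set.univ h) (hle : ∀ w, h w ≤ g w) (v : Fin m → ℝ) :
    h v ≤ convEnv g v :=
  le_csSup (bddAbove_S g v) ⟨h, hconv, hle, rfl⟩

lemma convEnv_le_self {g : (Fin m → ℝ) → ℝ} {c : ℝ} (hc : ∀ w, c ≤ g w) (v : Fin m → ℝ) :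
    convEnv g v ≤ g v :=
  csSup_le ⟨c, const_mem_S hc v⟩ (by rintro r ⟨h, _, hle, rfl⟩; exact hle v)

lemma convEnv_mono_affine {g₁ g₂ : (Fin m → ℝ) → ℝ} {a b c : ℝ}
    (ha : 0 < a) (hle : ∀ w, g₁ w ≤ a * g₂ w + b) (hc : ∀ w, c ≤ g₁ w) (v : Fin m → ℝ) :
    convEnv g₁ v ≤ a * convEnv g₂ v + b := by
  apply csSup_le ⟨c, const_mem_S hc v⟩
  rintro r ⟨h, hconv, hmin, rfl⟩
  have hconv' : ConvexOn ℝ Set.univ (fun w => (h w - b) / a) := by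
    refine ⟨convex_univ, fun x _ y _ s t hs ht hst => ?_⟩
    have h1 := hconv.2 (mem_univ x) (mem_univ y) hs ht hst
    simp only [smul_eq_mul] at *
    rw [div_le_iff₀ ha]
    have h4 : (s * ((h x - b)/a) + t * ((h y - b)/a)) * a = s * (h x - b) + t * (h y - b) := by
      field_simp
    have h5 : s * b + t * b = b := by rw [← add_mul, hst, one_mul]
    rw [h4]; linarith
  have hmin' : ∀ w, (h w - b)/a ≤ g₂ w := fun w => by
    rw [div_le_iff₀ ha]; nlinarith [hle w, hmin w]
  have hh := le_csSup (bddAbove_S g₂ v) (⟨_, hconv', hmin', rfl⟩ : _ ∈ S g₂ v)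
  rw [div_le_iff₀ ha] at hh
  have := convEnv_eq g₂ v
  nlinarith [hh]

lemma convEnv_convexOn {g : (Fin m → ℝ) → ℝ} {c : ℝ} (hc : ∀ w, c ≤ g w) :
    ConvexOn ℝ Set.univ (convEnv g) := by
  refine ⟨convex_univ, fun x _ y _ s t hs ht hst => ?_⟩
  apply csSup_le ⟨c, const_mem_S hc _⟩
  rintro r ⟨h, hconv, hmin, rfl⟩
  have h1 := hconv.2 (mem_univ x) (mem_univ y) hs ht hst
  have h2 : h x ≤ convEnv g x := le_convEnv hconv hmin x
  have h3 : h y ≤ convEnv g y := le_convEnv hconv hmin y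
  simp only [smul_eq_mul] at *
  nlinarith

end Stmt11Aux

theorem stmt11 {N d m : ℕ} (Ω : Set (Fin N → ℝ)) (hΩo : IsOpen Ω)
    (hΩb : Bornology.IsBounded Ω)
    (φ : (Fin N → ℝ) → (Fin d → ℝ) → (Fin m → ℝ) → ℝ)
    (hmeas : ∀ (u : Fin d → ℝ) (v : Fin m → ℝ), Measurable fun x => φ x u v)
    (hcar : ∀ᵐ x ∂(volume.restrict Ω),
      Continuous fun p : (Fin d → ℝ) × (Fin m → ℝ) => φ x p.1 p.2)
    (C p q : ℝ) (hC : 0 < C) (hp : 1 ≤ p) (hq : 1 ≤ q)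
    (hφ : ∀ x ∈ Ω, ∀ (u : Fin d → ℝ) (v : Fin m → ℝ),
      C⁻¹ * ‖v‖ ^ q - C ≤ φ x u v ∧ φ x u v ≤ C * (1 + ‖u‖ ^ p + ‖v‖ ^ q))
    (ω' : ℝ → ℝ) (hω' : Modulus ω')
    (hu : ∀ x ∈ Ω, ∀ (u u' : Fin d → ℝ) (v : Fin m → ℝ),
      |φ x u v - φ x u' v| ≤ ω' ‖u - u'‖ * (1 + ‖v‖)) :
    ∀ᵐ x ∂(volume.restrict Ω),
      Continuous fun p : (Fin d → ℝ) × (Fin m → ℝ) => convEnv (φ x p.1) p.2 := by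
  filter_upwards [ae_restrict_mem hΩo.measurableSet] with x hx
  obtain ⟨hωc, hω0, hωnn⟩ := hω'
  have hlow : ∀ (u : Fin d → ℝ) (w : Fin m → ℝ), -C ≤ φ x u w := by
    intro u w
    have h := (hφ x hx u w).1
    have h0 : (0:ℝ) ≤ C⁻¹ * ‖w‖ ^ q := by positivity
    linarith
  have hupp : ∀ (u : Fin d → ℝ) (w : Fin m → ℝ), φ x u w ≤ C * (1 + ‖u‖^p + ‖w‖^q) :=
    fun u w => (hφ x hx u w).2
  set M : (Fin d → ℝ) → (Fin m → ℝ) → ℝ :=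
    fun u v => C * (C * (1 + ‖u‖^p + ‖v‖^q)) + (2 + C^2) with hMdef
  have hMnn : ∀ u v, 0 ≤ M u v := by
    intro u v; simp only [hMdef]; positivity
  -- key transfer estimate
  have key : ∀ (u u' : Fin d → ℝ) (v : Fin m → ℝ),
      convEnv (φ x u') v ≤ (1 + ω' ‖u - u'‖ * C) * convEnv (φ x u) v
        + ω' ‖u - u'‖ * (2 + C^2) := by
    intro u u' v
    have hεnn : 0 ≤ ω' ‖u - u'‖ := hωnn _
    have ha : 0 < 1 + ω' ‖u - u'‖ * C := by positivity
    apply Stmt11Aux.convEnv_mono_affine ha ?_ (hlow u') v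
    intro w
    have h1 : φ x u' w - φ x u w ≤ ω' ‖u - u'‖ * (1 + ‖w‖) := by
      have h := hu x hx u' u w
      rw [norm_sub_rev] at h
      exact (abs_le.mp h).2
    have h2 : ‖w‖ ≤ 1 + ‖w‖ ^ q := by
      rcases le_total (‖w‖) 1 with h | h
      · have h0 : (0:ℝ) ≤ ‖w‖^q := Real.rpow_nonneg (norm_nonneg _) q
        linarith
      · have h0 : ‖w‖ ^ (1:ℝ) ≤ ‖w‖ ^ q := Real.rpow_le_rpow_of_exponent_le h hq
        rw [Real.rpow_one] at h0; linarith
    have h3 : ‖w‖ ^ q ≤ C * (φ x u w + C) := by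
      have h := (hφ x hx u w).1
      have h' := mul_le_mul_of_nonneg_left
        (show C⁻¹ * ‖w‖^q ≤ φ x u w + C by linarith) hC.le
      rwa [← mul_assoc, mul_inv_cancel₀ hC.ne', one_mul] at h'
    have e2 : ω' ‖u - u'‖ * ‖w‖ ≤ ω' ‖u - u'‖ * (1 + ‖w‖^q) :=
      mul_le_mul_of_nonneg_left h2 hεnn
    have e3 : ω' ‖u - u'‖ * ‖w‖^q ≤ ω' ‖u - u'‖ * (C * (φ x u w + C)) :=
      mul_le_mul_of_nonneg_left h3 hεnn
    nlinarith [h1, e2, e3]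
  have hub : ∀ (u : Fin d → ℝ) (v : Fin m → ℝ),
      convEnv (φ x u) v ≤ C * (1 + ‖u‖^p + ‖v‖^q) :=
    fun u v => (Stmt11Aux.convEnv_le_self (hlow u) v).trans (hupp u v)
  have hdiff : ∀ (u u' : Fin d → ℝ) (v : Fin m → ℝ),
      convEnv (φ x u') v - convEnv (φ x u) v ≤ ω' ‖u - u'‖ * M u v := by
    intro u u' v
    have k := key u u' v
    have hεnn : 0 ≤ ω' ‖u - u'‖ := hωnn _
    have h2 : ω' ‖u - u'‖ * C * convEnv (φ x u) v
        ≤ ω' ‖u - u'‖ * C * (C * (1 + ‖u‖^p + ‖v‖^q)) :=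
      mul_le_mul_of_nonneg_left (hub u v) (by positivity)
    simp only [hMdef]
    nlinarith [k, h2]
  -- continuity
  rw [continuous_iff_continuousAt]
  rintro ⟨u₀, v₀⟩
  have hFcont : Continuous fun v => convEnv (φ x u₀) v := by
    have hcx := Stmt11Aux.convEnv_convexOn (g := φ x u₀) (hlow u₀)
    exact continuousOn_univ.mp (hcx.continuousOn isOpen_univ)
  have hrpow_cont : ∀ (k : ℕ) (r : ℝ), 1 ≤ r →
      Continuous fun w : Fin k → ℝ => ‖w‖ ^ r := by
    intro k r hr
    rw [continuous_iff_continuousAt]; intro w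
    exact (Real.continuousAt_rpow_const _ _ (Or.inr (by linarith))).comp
      continuous_norm.continuousAt
  have hMc : Continuous fun pr : (Fin d → ℝ) × (Fin m → ℝ) => M pr.1 pr.2 := by
    simp only [hMdef]
    exact (continuous_const.mul (continuous_const.mul
      ((continuous_const.add ((hrpow_cont d p hp).comp continuous_fst)).add
        ((hrpow_cont m q hq).comp continuous_snd)))).add continuous_const
  have hM0c : Continuous fun pr : (Fin d → ℝ) × (Fin m → ℝ) => M u₀ pr.2 := by
    simp only [hMdef]
    exact (continuous_const.mul (continuous_const.mul
      ((continuous_const.add continuous_const).add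
        ((hrpow_cont m q hq).comp continuous_snd)))).add continuous_const
  set G : (Fin d → ℝ) × (Fin m → ℝ) → ℝ := fun pr =>
    ω' ‖pr.1 - u₀‖ * (M pr.1 pr.2 + M u₀ pr.2)
      + |convEnv (φ x u₀) pr.2 - convEnv (φ x u₀) v₀| with hGdef
  have hG : Continuous G := by
    apply Continuous.add
    · exact (hωc.comp (continuous_fst.sub continuous_const).norm).mul (hMc.add hM0c)
    · exact ((hFcont.comp continuous_snd).sub continuous_const).abs
  have hGval : G (u₀, v₀) = 0 := by
    simp [hGdef, hω0]
  have hbound : ∀ pr : (Fin d → ℝ) × (Fin m → ℝ),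
      |convEnv (φ x pr.1) pr.2 - convEnv (φ x u₀) v₀| ≤ G pr := by
    rintro ⟨u, v⟩
    have t1 : |convEnv (φ x u) v - convEnv (φ x u₀) v|
        ≤ ω' ‖u - u₀‖ * (M u v + M u₀ v) := by
      rw [abs_sub_le_iff]
      constructor
      · have h := hdiff u₀ u v
        rw [norm_sub_rev] at h
        have h2 : 0 ≤ ω' ‖u - u₀‖ * M u v := mul_nonneg (hωnn _) (hMnn u v)
        nlinarith
      · have h := hdiff u u₀ v
        have h2 : 0 ≤ ω' ‖u - u₀‖ * M u₀ v := mul_nonneg (hωnn _) (hMnn u₀ v)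
        nlinarith
    calc |convEnv (φ x u) v - convEnv (φ x u₀) v₀|
        ≤ |convEnv (φ x u) v - convEnv (φ x u₀) v|
          + |convEnv (φ x u₀) v - convEnv (φ x u₀) v₀| := abs_sub_le _ _ _
      _ ≤ G (u, v) := by rw [hGdef]; exact add_le_add t1 le_rfl
  have hsq : Tendsto (fun pr : (Fin d → ℝ) × (Fin m → ℝ) =>
      |convEnv (φ x pr.1) pr.2 - convEnv (φ x u₀) v₀|) (𝓝 (u₀, v₀)) (𝓝 0) := by
    have hGt : Tendsto G (𝓝 (u₀, v₀)) (𝓝 0) := by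
      have := hG.continuousAt (x := (u₀, v₀))
      rwa [ContinuousAt, hGval] at this
    exact squeeze_zero (fun pr => abs_nonneg _) hbound hGt
  rw [ContinuousAt, tendsto_iff_dist_tendsto_zero]
  simpa [Real.dist_eq] using hsq

end
end
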